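/- arXiv:1309.4062 — 2 statements merged into one kernel-verified Lean document; each statement's English description precedes it below -/
import Mathlib

section
/- Let M be a positive integer and let a, C, c > 0 and, for each j ∈ {1,…,M}, λ_j > 0, b_j > 0 and q_j ∈ (0,1] be real numbers. Define D : [0,1]^M → ℝ by D(p) = C · (Σ_{j=1}^M λ_j q_j min{a p_j, b_j}) / (1 + c Σ_{j=1}^M λ_j q_j p_j). Then D attains its maximum over [0,1]^M at the point p* given by p*_j = min{1, b_j / a} for every j. -/
open Finset

/-- Proposition 5: the rate-density lower bound of the dedicated network is maximized
over the hopping-probability cube `[0,1]^M` at `p*_j = min {1, b_j / a}`. -/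
theorem stmt_11 (M : ℕ) (hM : 0 < M) (a C c : ℝ) (ha : 0 < a) (hC : 0 < C) (hc : 0 < c)
    (lam b q : Fin M → ℝ) (hlam : ∀ j, 0 < lam j) (hb : ∀ j, 0 < b j)
    (hq : ∀ j, q j ∈ Set.Ioc (0 : ℝ) 1)
    (D : (Fin M → ℝ) → ℝ)
    (hD : ∀ p, D p = C * (∑ j, lam j * q j * min (a * p j) (b j))
        / (1 + c * ∑ j, lam j * q j * p j)) :
    (∀ j, min 1 (b j / a) ∈ Set.Icc (0 : ℝ) 1) ∧
    ∀ p : Fin M → ℝ, (∀ j, p j ∈ Set.Icc (0 : ℝ) 1) →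
      D p ≤ D (fun j => min 1 (b j / a)) := by
  set P : Fin M → ℝ := fun j => min 1 (b j / a) with hP
  have hPmem : ∀ j, P j ∈ Set.Icc (0 : ℝ) 1 := by
    intro j
    constructor
    · exact le_min zero_le_one (le_of_lt (div_pos (hb j) ha))
    · exact min_le_left _ _
  refine ⟨hPmem, ?_⟩
  intro p hp
  have haP : ∀ j, a * P j = min a (b j) := by
    intro j
    rw [hP]
    simp only
    rw [mul_min_of_nonneg _ _ ha.le, mul_one, mul_div_cancel₀ _ (ne_of_gt ha)]
  -- key identity: min (a p_j) (b_j) = a * min (p_j) (P_j)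
  have hkey : ∀ j, min (a * p j) (b j) = a * min (p j) (P j) := by
    intro j
    rw [mul_min_of_nonneg _ _ ha.le, haP, ← min_assoc]
    congr 1
    exact (min_eq_left (mul_le_of_le_one_right ha.le (hp j).2)).symm
  have hkeyP : ∀ j, min (a * P j) (b j) = a * min (P j) (P j) := by
    intro j
    rw [min_self, haP, min_eq_left (min_le_right a (b j))]
  set s1 : ℝ := ∑ j, lam j * q j * min (p j) (P j) with hs1
  set sP : ℝ := ∑ j, lam j * q j * P j with hsP
  set S : ℝ := ∑ j, lam j * q j * p j with hS
  have hlamq : ∀ j, 0 ≤ lam j * q j := fun j =>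
    mul_nonneg (hlam j).le (hq j).1.le
  have hs1nn : 0 ≤ s1 :=
    Finset.sum_nonneg fun j _ => mul_nonneg (hlamq j)
      (le_min (hp j).1 (hPmem j).1)
  have hs1S : s1 ≤ S :=
    Finset.sum_le_sum fun j _ => by
      have := min_le_left (p j) (P j)
      nlinarith [hlamq j]
  have hs1sP : s1 ≤ sP :=
    Finset.sum_le_sum fun j _ => by
      have := min_le_right (p j) (P j)
      nlinarith [hlamq j]
  have hDen1 : (0:ℝ) < 1 + c * s1 := by nlinarith
  have hDenS : (0:ℝ) < 1 + c * S := by nlinarith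
  have hDenP : (0:ℝ) < 1 + c * sP := by nlinarith
  have hNum : (∑ j, lam j * q j * min (a * p j) (b j)) = a * s1 := by
    rw [hs1, Finset.mul_sum]
    exact Finset.sum_congr rfl fun j _ => by rw [hkey j]; ring
  have hNumP : (∑ j, lam j * q j * min (a * P j) (b j)) = a * sP := by
    rw [hsP, Finset.mul_sum]
    exact Finset.sum_congr rfl fun j _ => by rw [hkeyP j, min_self]; ring
  rw [hD, hD, hNum]
  have hNumP' : (∑ j, lam j * q j * min (a * (fun j => min 1 (b j / a)) j) (b j))
      = a * sP := hNumP
  rw [hNumP']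
  have hsP' : (∑ j, lam j * q j * (fun j => min 1 (b j / a)) j) = sP := rfl
  rw [hsP']
  have h1 : C * (a * s1) / (1 + c * S) ≤ C * (a * s1) / (1 + c * s1) := by
    apply div_le_div_of_nonneg_left _ hDen1 (by nlinarith)
    positivity
  refine h1.trans ?_
  rw [div_le_div_iff₀ hDen1 hDenP]
  nlinarith [mul_le_mul_of_nonneg_left hs1sP (mul_pos hC ha).le]
end

section
/- Let M be a positive integer, let T ∈ ℝ and A > 0 be real numbers, let b_j > 0 and λ_j > 0 for j = 1,…,M, let b_C > 0, λ_U > 0 and w ≥ 1 be real numbers, and let x ∈ [0,1]^M. Define d : ∏_{j=1}^M [x_j, 1] → ℝ by d(p) = T + A · (Σ_{j=1}^M b_j λ_j (1 − p_j) + w b_C λ_U) / (b_C λ_U + Σ_{j=1}^M b_j λ_j (1 − p_j)). Then d attains its maximum over ∏_{j=1}^M [x_j, 1] at p = (1, …, 1). -/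
open Finset

/-- Proposition 8: in the fully loaded shared network, after the change of variables
`x_j = p_{t_j} p_{f_j}`, the rate density is maximized over
`∏_j [x_j, 1]` at the all-ones time-hopping vector. -/
theorem stmt_19 (M : ℕ) (hM : 0 < M) (T A : ℝ) (hA : 0 < A)
    (b lam : Fin M → ℝ) (hb : ∀ j, 0 < b j) (hlam : ∀ j, 0 < lam j)
    (bC lamU w : ℝ) (hbC : 0 < bC) (hlamU : 0 < lamU) (hw : 1 ≤ w)
    (x : Fin M → ℝ) (hx : ∀ j, x j ∈ Set.Icc (0 : ℝ) 1)
    (d : (Fin M → ℝ) → ℝ)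
    (hd : ∀ p, d p = T + A * ((∑ j, b j * lam j * (1 - p j)) + w * bC * lamU)
        / (bC * lamU + ∑ j, b j * lam j * (1 - p j))) :
    ∀ p : Fin M → ℝ, (∀ j, p j ∈ Set.Icc (x j) 1) → d p ≤ d (fun _ => 1) := by
  intro p hp
  rw [hd, hd]
  have hc : 0 < bC * lamU := mul_pos hbC hlamU
  set S := ∑ j, b j * lam j * (1 - p j) with hS
  have hS0 : 0 ≤ S := by
    apply Finset.sum_nonneg
    intro j _
    have h1 : 0 ≤ 1 - p j := by linarith [(hp j).2]
    exact mul_nonneg (mul_nonneg (hb j).le (hlam j).le) h1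
  simp only [sub_self, mul_zero, Finset.sum_const_zero, zero_add, add_zero]
  have hd1 : A * (w * bC * lamU) / (bC * lamU) = A * w := by
    field_simp
  have key : A * (S + w * bC * lamU) / (bC * lamU + S) ≤ A * w := by
    rw [div_le_iff₀ (by linarith)]
    have : S ≤ w * S := le_mul_of_one_le_left hS0 hw
    nlinarith
  linarith
end
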